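/- Let T ∈ (0,1), G ≥ 1, μ_max > 0. Suppose f : {-1,0,1}^G → ℝ is nonnegative with maximum value μ_max, satisfies the no-free-lunch condition, and satisfies for every index i and every fixed choice of the other coordinates: T·f(...,1,...) + (1-T)·f(...,-1,...) = f(...,0,...). Then f(y_1,...,y_G) = μ_max · T^G · ∏_{i=1}^G α_{y_i}, where α_{-1} = 0, α_0 = 1, α_1 = 1/T. -/

import Mathlib

lemma filter_update_erase {G : ℕ} (y : Fin G → ℤ) (i : Fin G) (a c : ℤ) (h : a ≠ c) :
    Finset.univ.filter (fun j => Function.update y i a j = c)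
      = (Finset.univ.filter (fun j => y j = c)).erase i := by
  ext j
  by_cases hj : j = i
  · subst hj; simp [Function.update_self, h]
  · simp [Function.update_of_ne hj, hj]

/-- Theorem 2, uniqueness: any nonnegative mechanism with maximum value μ_max
satisfying no-free-lunch and the coordinatewise identity is the multiplicative mechanism. -/
theorem skip_mechanism_unique
    (G : ℕ) (hG : 1 ≤ G) (T μmax : ℝ) (hT0 : 0 < T) (hT1 : T < 1) (hμ : 0 < μmax)
    (f : (Fin G → ℤ) → ℝ)
    (hnonneg : ∀ y : Fin G → ℤ, (∀ j, y j = -1 ∨ y j = 0 ∨ y j = 1) → 0 ≤ f y)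
    (hbound : ∀ y : Fin G → ℤ, (∀ j, y j = -1 ∨ y j = 0 ∨ y j = 1) → f y ≤ μmax)
    (hattain : ∃ y : Fin G → ℤ, (∀ j, y j = -1 ∨ y j = 0 ∨ y j = 1) ∧ f y = μmax)
    (hnfl : ∀ y : Fin G → ℤ, (∀ j, y j = -1 ∨ y j = 0 ∨ y j = 1) →
        (∃ j, y j ≠ 0) → (∀ j, y j ≠ 0 → y j = -1) → f y = 0)
    (hid : ∀ y : Fin G → ℤ, (∀ j, y j = -1 ∨ y j = 0 ∨ y j = 1) → ∀ i,
        T * f (Function.update y i 1) + (1 - T) * f (Function.update y i (-1))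
          = f (Function.update y i 0)) :
    ∀ y : Fin G → ℤ, (∀ j, y j = -1 ∨ y j = 0 ∨ y j = 1) →
      f y = μmax * T ^ G *
        ∏ i, (if y i = 1 then 1 / T else if y i = 0 then (1 : ℝ) else 0) := by
  have hTne : T ≠ 0 := ne_of_gt hT0
  -- admissibility of updates
  have hupd : ∀ (y : Fin G → ℤ), (∀ j, y j = -1 ∨ y j = 0 ∨ y j = 1) →
      ∀ (i : Fin G) (a : ℤ), (a = -1 ∨ a = 0 ∨ a = 1) →
      ∀ j, Function.update y i a j = -1 ∨ Function.update y i a j = 0 ∨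
        Function.update y i a j = 1 := by
    intro y hy i a ha j
    by_cases hj : j = i
    · subst hj; simpa using ha
    · simpa [Function.update_of_ne hj] using hy j
  -- Step 1: any vector containing a -1 has value 0
  have zero_of_neg : ∀ (y : Fin G → ℤ), (∀ j, y j = -1 ∨ y j = 0 ∨ y j = 1) →
      (∃ i, y i = -1) → f y = 0 := by
    have key : ∀ (n : ℕ) (y : Fin G → ℤ), (∀ j, y j = -1 ∨ y j = 0 ∨ y j = 1) →
        (Finset.univ.filter (fun j => y j = 1)).card = n → (∃ i, y i = -1) → f y = 0 := by
      intro n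
      induction n with
      | zero =>
        intro y hy hcard ⟨i, hi⟩
        apply hnfl y hy ⟨i, by rw [hi]; decide⟩
        intro j hj
        rcases hy j with h | h | h
        · exact h
        · exact absurd h hj
        · exfalso
          have : j ∈ Finset.univ.filter (fun j => y j = 1) := by simp [h]
          rw [Finset.card_eq_zero] at hcard
          simp [hcard] at this
      | succ n ih =>
        intro y hy hcard ⟨i, hi⟩
        have hne : (Finset.univ.filter (fun j => y j = 1)).Nonempty := by
          rw [← Finset.card_pos, hcard]; omega
        obtain ⟨j, hj⟩ := hne
        have hj1 : y j = 1 := by simpa using hj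
        set y0 := Function.update y j 0 with hy0def
        have hA0 := hupd y hy j 0 (by right; left; rfl)
        have hij : i ≠ j := fun h => by rw [h, hj1] at hi; exact absurd hi (by decide)
        have hneg0 : y0 i = -1 := by rw [hy0def, Function.update_of_ne hij]; exact hi
        have hcard0 : (Finset.univ.filter (fun k => y0 k = 1)).card = n := by
          rw [hy0def, filter_update_erase y j 0 1 (by decide),
            Finset.card_erase_of_mem hj, hcard]
          omega
        have h0 : f y0 = 0 := ih y0 hA0 hcard0 ⟨i, hneg0⟩
        have hidj := hid y0 hA0 j
        have e1 : Function.update y0 j 1 = y := by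
          rw [hy0def, Function.update_idem, ← hj1, Function.update_eq_self]
        have e0 : Function.update y0 j 0 = y0 := by
          rw [hy0def, Function.update_idem]
        rw [e1, e0, h0] at hidj
        have hfy := hnonneg y hy
        have hfm := hnonneg _ (hupd y0 hA0 j (-1) (by left; rfl))
        nlinarith
    exact fun y hy hi => key _ y hy rfl hi
  -- Step 2: the all-ones vector attains μmax
  obtain ⟨ys, hys, hfs⟩ := hattain
  have hones : ∀ j, ys j = 1 := by
    intro j
    rcases hys j with h | h | h
    · exfalso
      have := zero_of_neg ys hys ⟨j, h⟩
      rw [this] at hfs; linarith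
    · exfalso
      have hidj := hid ys hys j
      have e0 : Function.update ys j 0 = ys := by rw [← h, Function.update_eq_self]
      have hm : f (Function.update ys j (-1)) = 0 :=
        zero_of_neg _ (hupd ys hys j (-1) (by left; rfl)) ⟨j, Function.update_self _ _ _⟩
      rw [e0, hfs, hm] at hidj
      have hb := hbound _ (hupd ys hys j 1 (by right; right; rfl))
      nlinarith
    · exact h
  -- Step 3: values on {0,1} vectors
  have pos_val : ∀ (n : ℕ) (y : Fin G → ℤ), (∀ j, y j = 0 ∨ y j = 1) →
      (Finset.univ.filter (fun j => y j = 0)).card = n → f y = μmax * T ^ n := by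
    intro n
    induction n with
    | zero =>
      intro y hy hcard
      have hyall : ∀ j, y j = 1 := by
        intro j
        rcases hy j with h | h
        · exfalso
          have : j ∈ Finset.univ.filter (fun k => y k = 0) := by simp [h]
          rw [Finset.card_eq_zero] at hcard
          simp [hcard] at this
        · exact h
      have : y = ys := by
        funext j; rw [hyall j, hones j]
      rw [this, hfs]; ring
    | succ n ih =>
      intro y hy hcard
      have hA : ∀ j, y j = -1 ∨ y j = 0 ∨ y j = 1 := fun j => Or.inr (hy j)
      have hne : (Finset.univ.filter (fun j => y j = 0)).Nonempty := by
        rw [← Finset.card_pos, hcard]; omega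
      obtain ⟨j, hj⟩ := hne
      have hj0 : y j = 0 := by simpa using hj
      have hidj := hid y hA j
      have e0 : Function.update y j 0 = y := by rw [← hj0, Function.update_eq_self]
      have hm : f (Function.update y j (-1)) = 0 :=
        zero_of_neg _ (hupd y hA j (-1) (by left; rfl)) ⟨j, Function.update_self _ _ _⟩
      set y1 := Function.update y j 1 with hy1def
      have hA1 : ∀ k, y1 k = 0 ∨ y1 k = 1 := by
        intro k
        by_cases hk : k = j
        · subst hk; simp [hy1def]
        · simpa [hy1def, Function.update_of_ne hk] using hy k
      have hcard1 : (Finset.univ.filter (fun k => y1 k = 0)).card = n := by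
        rw [hy1def, filter_update_erase y j 1 0 (by decide),
          Finset.card_erase_of_mem hj, hcard]
        omega
      have h1 : f y1 = μmax * T ^ n := ih y1 hA1 hcard1
      rw [e0, hm, h1] at hidj
      rw [← hidj]; ring
  -- Main conclusion
  intro y hy
  by_cases hneg : ∃ i, y i = -1
  · obtain ⟨i, hi⟩ := hneg
    rw [zero_of_neg y hy ⟨i, hi⟩]
    have : (if y i = 1 then 1 / T else if y i = 0 then (1 : ℝ) else 0) = 0 := by
      rw [hi]; norm_num
    rw [Finset.prod_eq_zero (Finset.mem_univ i) this]
    ring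
  · push_neg at hneg
    have hy' : ∀ j, y j = 0 ∨ y j = 1 := by
      intro j
      rcases hy j with h | h | h
      · exact absurd h (hneg j)
      · exact Or.inl h
      · exact Or.inr h
    set z := (Finset.univ.filter (fun j => y j = 0)).card with hz
    set k := (Finset.univ.filter (fun j => y j = 1)).card with hk
    have hzk : z + k = G := by
      have := Finset.card_filter_add_card_filter_not
        (s := (Finset.univ : Finset (Fin G))) (p := fun j => y j = 0)
      have hfe : Finset.univ.filter (fun j => ¬ y j = 0)
          = Finset.univ.filter (fun j => y j = 1) := by
        apply Finset.filter_congr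
        intro j _
        rcases hy' j with h | h <;> simp [h]
      rw [hfe] at this
      simpa [← hz, ← hk] using this
    have hfy : f y = μmax * T ^ z := pos_val z y hy' rfl
    have hprod : (∏ i, (if y i = 1 then 1 / T else if y i = 0 then (1 : ℝ) else 0))
        = (1 / T) ^ k := by
      have : ∀ i : Fin G, (if y i = 1 then 1 / T else if y i = 0 then (1 : ℝ) else 0)
          = (if y i = 1 then 1 / T else 1) := by
        intro i
        rcases hy' i with h | h <;> simp [h]
      rw [Finset.prod_congr rfl fun i _ => this i, Finset.prod_ite,
        Finset.prod_const, Finset.prod_const, one_pow, mul_one, hk]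
    rw [hfy, hprod, ← hzk, pow_add]
    field_simp
    rw [← mul_pow, mul_one_div_cancel hTne, one_pow]
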